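/- Let w be a braid word that begins with σ_1 and contains no occurrence of σ_1^{−1}. Let σ̂ ∈ Aut(F_n) be the image of the braid represented by w under Wada's representation of type (3). Then the reduced word representing σ̂(x_1) in F_n contains at least 2 occurrences of letters x_1^{±1}. -/

import Mathlib

/-- The defining relations of the braid group on `m + 1` strands (`m` generators
`σ_1, …, σ_m`, indexed here by `Fin m`): the commutation relations
`σ_i σ_j = σ_j σ_i` for `|i - j| > 1` and the braid relations
`σ_i σ_{i+1} σ_i = σ_{i+1} σ_i σ_{i+1}`. -/
def braidRels (m : ℕ) : Set (FreeGroup (Fin m)) :=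
  {r | (∃ i j : Fin m, (i : ℕ) + 1 < (j : ℕ) ∧
        r = FreeGroup.of i * FreeGroup.of j * (FreeGroup.of i)⁻¹ * (FreeGroup.of j)⁻¹) ∨
       (∃ i j : Fin m, (i : ℕ) + 1 = (j : ℕ) ∧
        r = FreeGroup.of i * FreeGroup.of j * FreeGroup.of i *
            (FreeGroup.of j * FreeGroup.of i * FreeGroup.of j)⁻¹)}

/-- The index in `Fin n` of the generator `x_i` of `F_n` acted on by `σ_i`
(the strand index `i`, `0`-based). -/
def xL (n : ℕ) (i : Fin (n - 1)) : Fin n := ⟨i, by have := i.isLt; omega⟩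

/-- The index in `Fin n` of the generator `x_{i+1}` of `F_n` acted on by `σ_i`. -/
def xR (n : ℕ) (i : Fin (n - 1)) : Fin n := ⟨(i : ℕ) + 1, by have := i.isLt; omega⟩

section
set_option maxHeartbeats 1000000
set_option linter.unusedSectionVars false
namespace WadaAux
open FreeGroup List

variable {α : Type*} [DecidableEq α]

def Cancels (x y : α × Bool) : Prop := x.1 = y.1 ∧ x.2 = !y.2

def IsRed (L : List (α × Bool)) : Prop := List.Chain' (fun x y => ¬ Cancels x y) L

lemma isRed_nil : IsRed ([] : List (α × Bool)) := List.isChain_nil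

lemma IsRed.tail' {x : α × Bool} {L : List (α × Bool)} (h : IsRed (x :: L)) : IsRed L :=
  (List.isChain_cons.mp h).2

lemma IsRed.head_rel {x : α × Bool} {L : List (α × Bool)} (h : IsRed (x :: L)) :
    ∀ y ∈ L.head?, ¬ Cancels x y := (List.isChain_cons.mp h).1

lemma IsRed.cons {x : α × Bool} {L : List (α × Bool)} (h : IsRed L)
    (hx : ∀ y ∈ L.head?, ¬ Cancels x y) : IsRed (x :: L) := List.isChain_cons.mpr ⟨hx, h⟩

lemma isRed_reduce_eq {L : List (α × Bool)} (h : IsRed L) : reduce L = L := by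
  induction L with
  | nil => rfl
  | cons x t ih =>
    have ht := ih h.tail'
    rw [reduce.cons, ht]
    cases t with
    | nil => rfl
    | cons y s =>
      have := h.head_rel y (by simp)
      simp only [Cancels] at this
      simp [this]

lemma isRed_of_reduce {L : List (α × Bool)} (h : reduce L = L) : IsRed L := by
  induction L with
  | nil => exact isRed_nil
  | cons x t ih =>
    rw [reduce.cons] at h
    rcases hrt : reduce t with _ | ⟨y, s⟩
    · rw [hrt] at h
      have h' : [x] = x :: t := h
      have : t = [] := by injection h' with _ h2; exact h2.symm
      subst this
      exact List.isChain_singleton x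
    · rw [hrt] at h
      by_cases hc : x.1 = y.1 ∧ x.2 = !y.2
      · have h' : s = x :: t := by
          have h'' : (if x.1 = y.1 ∧ x.2 = !y.2 then s else x :: y :: s) = x :: t := h
          rwa [if_pos hc] at h''
        have := congrArg List.length h'
        have hle := FreeGroup.Red.length_le (reduce.red (L := t))
        rw [hrt] at hle
        simp at this hle
        omega
      · have h' : x :: y :: s = x :: t := by
          have h'' : (if x.1 = y.1 ∧ x.2 = !y.2 then s else x :: y :: s) = x :: t := h
          rwa [if_neg hc] at h''
        have ht : t = y :: s := by injection h' with _ h2; exact h2.symm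
        have hred : reduce t = t := by rw [ht, ← hrt]; exact reduce.idem
        have := ih hred
        subst ht
        exact List.isChain_cons_cons.mpr ⟨hc, this⟩

lemma isRed_toWord (g : FreeGroup α) : IsRed (toWord g) :=
  isRed_of_reduce (reduce_toWord g)

lemma toWord_mk_isRed {L : List (α × Bool)} (h : IsRed L) : (mk L).toWord = L := by
  rw [toWord_mk, isRed_reduce_eq h]

def e (x : α × Bool) : FreeGroup α := cond x.2 (of x.1) (of x.1)⁻¹

@[simp] lemma e_true (j : α) : e (j, true) = of j := rfl
@[simp] lemma e_false (j : α) : e (j, false) = (of j)⁻¹ := rfl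

lemma mk_nil : (mk [] : FreeGroup α) = 1 := one_eq_mk.symm

lemma mk_single (x : α × Bool) : mk [x] = e x := by
  rcases x with ⟨j, b⟩
  cases b
  · show mk [(j, false)] = (of j)⁻¹
    calc mk [(j, false)] = (mk [(j, true)])⁻¹ := by rw [inv_mk]; rfl
    _ = (of j)⁻¹ := rfl
  · rfl

lemma mk_cons (x : α × Bool) (L : List (α × Bool)) : mk (x :: L) = e x * mk L := by
  rw [← mk_single, mul_mk]
  rfl

lemma mk_ne_one {L : List (α × Bool)} (h : IsRed L) (hne : L ≠ []) : mk L ≠ 1 := by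
  intro h1
  have := toWord_mk_isRed h
  rw [h1, toWord_one] at this
  exact hne this.symm

lemma nc_same (j k : α) (b : Bool) : ¬ Cancels (j, b) (k, b) := by simp [Cancels]

lemma nc_ne {j k : α} (h : j ≠ k) (b b' : Bool) : ¬ Cancels (j, b) (k, b') := fun hc => h hc.1

/-- The clause system describing the reduced word of `θ (mk L)` by the first letters of `L`. -/
def clsHead (u v : α) (x : α × Bool) (h2 : Option (α × Bool)) (M : List (α × Bool)) : Prop :=
  if x = (u, true) then
    (∃ y M', M = y :: M' ∧ (y = (u, true) ∨ y = (u, false) ∨ y = (v, true)))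
    ∧ (h2 = some (u, true) → ∃ M', M = (u, true) :: (u, true) :: M')
  else if x = (u, false) then
    ∃ M', M = (v, false) :: (u, false) :: (u, false) :: M' ∧
      ∀ z ∈ M'.head?, z = (v, false) ∨ (z.1 ≠ u ∧ z.1 ≠ v)
  else if x = (v, true) then
    (∃ M', M = (v, false) :: (u, false) :: (v, true) :: M')
    ∨ (∃ M', M = (v, false) :: (u, false) :: (u, false) :: M' ∧
         ∀ z ∈ M'.head?, z = (u, false) ∨ z = (v, true))
  else if x = (v, false) then
    ∃ M', M = (v, false) :: M' ∧
      ∀ M'', M' = (u, false) :: M'' → ∀ z ∈ M''.head?, z = (v, false) ∨ (z.1 ≠ u ∧ z.1 ≠ v)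
  else M.head? = some x

def Cls (u v : α) : List (α × Bool) → List (α × Bool) → Prop
  | [], M => M = []
  | x :: t, M => clsHead u v x t.head? M

lemma nc_fst {x z : α × Bool} (h : x.1 ≠ z.1) : ¬ Cancels x z := fun hc => h hc.1

lemma head_ne_of_cls {u v : α} {t M : List (α × Bool)} (h : Cls u v t M) (x : α × Bool)
    (hxu : x.1 ≠ u) (hxv : x.1 ≠ v) (hxt : ∀ z ∈ t.head?, ¬ Cancels x z) :
    ∀ z ∈ M.head?, ¬ Cancels x z := by
  cases t with
  | nil =>
    have h' : M = [] := h
    subst h'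
    simp
  | cons y t' =>
    have h' : clsHead u v y t'.head? M := h
    unfold clsHead at h'
    intro z hz
    by_cases h1 : y = (u, true)
    · rw [if_pos h1] at h'
      obtain ⟨⟨z0, M', rfl, hz0⟩, -⟩ := h'
      simp at hz
      subst hz
      rcases hz0 with rfl | rfl | rfl
      · exact nc_fst hxu
      · exact nc_fst hxu
      · exact nc_fst hxv
    · rw [if_neg h1] at h'
      by_cases h2 : y = (u, false)
      · rw [if_pos h2] at h'
        obtain ⟨M', rfl, -⟩ := h'
        simp at hz
        subst hz
        exact nc_fst hxv
      · rw [if_neg h2] at h'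
        by_cases h3 : y = (v, true)
        · rw [if_pos h3] at h'
          rcases h' with ⟨M', rfl⟩ | ⟨M', rfl, -⟩ <;>
          · simp at hz
            subst hz
            exact nc_fst hxv
        · rw [if_neg h3] at h'
          by_cases h4 : y = (v, false)
          · rw [if_pos h4] at h'
            obtain ⟨M', rfl, -⟩ := h'
            simp at hz
            subst hz
            exact nc_fst hxv
          · rw [if_neg h4] at h'
            rw [h'] at hz
            simp at hz
            subst hz
            exact hxt y (by simp)

lemma cls_head_B {u v : α} {t M : List (α × Bool)} (h : Cls u v t M)
    (ht : t.head? ≠ some (u, true)) :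
    ∀ z ∈ M.head?, z = (v, false) ∨ (z.1 ≠ u ∧ z.1 ≠ v) := by
  cases t with
  | nil =>
    have h' : M = [] := h
    subst h'
    simp
  | cons y t' =>
    have h' : clsHead u v y t'.head? M := h
    unfold clsHead at h'
    intro z hz
    by_cases h1 : y = (u, true)
    · exact absurd (by simp [h1] : (y :: t').head? = some (u, true)) ht
    · rw [if_neg h1] at h'
      by_cases h2 : y = (u, false)
      · rw [if_pos h2] at h'
        obtain ⟨M', rfl, -⟩ := h'
        simp at hz
        subst hz
        left; rfl
      · rw [if_neg h2] at h'
        by_cases h3 : y = (v, true)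
        · rw [if_pos h3] at h'
          rcases h' with ⟨M', rfl⟩ | ⟨M', rfl, -⟩ <;>
          · simp at hz
            subst hz
            left; rfl
        · rw [if_neg h3] at h'
          by_cases h4 : y = (v, false)
          · rw [if_pos h4] at h'
            obtain ⟨M', rfl, -⟩ := h'
            simp at hz
            subst hz
            left; rfl
          · rw [if_neg h4] at h'
            rw [h'] at hz
            simp at hz
            subst hz
            right
            rcases y with ⟨j, b⟩
            cases b
            · exact ⟨fun hj => h2 (by simp at hj; simp [hj]), fun hj => h4 (by simp at hj; simp [hj])⟩
            · exact ⟨fun hj => h1 (by simp at hj; simp [hj]), fun hj => h3 (by simp at hj; simp [hj])⟩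

theorem master (u v : α) (huv : u ≠ v) (θ : FreeGroup α ≃* FreeGroup α)
    (hu : θ (of u) = of u * of u * of v)
    (hv : θ (of v) = (of v)⁻¹ * (of u)⁻¹ * of v)
    (ho : ∀ j, j ≠ u → j ≠ v → θ (of j) = of j) :
    ∀ L : List (α × Bool), IsRed L → Cls u v L (θ (mk L)).toWord := by
  intro L
  induction L with
  | nil =>
    intro _
    show (θ (mk [])).toWord = []
    rw [mk_nil, _root_.map_one, toWord_one]
  | cons x t ih =>
    intro hred
    have hredt : IsRed t := hred.tail'
    have ihc := ih hredt
    have hMred : IsRed (θ (mk t)).toWord := isRed_toWord _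
    have hmkM : mk (θ (mk t)).toWord = θ (mk t) := mk_toWord
    set M := (θ (mk t)).toWord with hMdef
    have hsplit : θ (mk (x :: t)) = θ (e x) * mk M := by
      rw [mk_cons, _root_.map_mul, hmkM]
    by_cases hx1 : x = (u, true)
    · subst hx1
      have hth : t.head? ≠ some (u, false) := fun hh => hred.head_rel (u, false) hh ⟨rfl, rfl⟩
      show clsHead u v (u, true) t.head? (θ (mk ((u, true) :: t))).toWord
      unfold clsHead
      rw [if_pos rfl]
      rcases t with _ | ⟨y, t'⟩
      · -- C1 : t = []
        have hM : M = [] := ihc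
        have key : θ (mk [(u, true)]) = mk [(u, true), (u, true), (v, true)] := by
          rw [hsplit, hM, mk_nil, e_true, hu]
          simp only [mk_cons, mk_nil, e_true]
          group
        have hWred : IsRed [(u, true), (u, true), (v, true)] := by
          refine IsRed.cons (IsRed.cons (IsRed.cons isRed_nil (by simp)) ?_) ?_
          · simp [Cancels, huv, huv.symm]
          · simp [Cancels, huv, huv.symm]
        rw [key, toWord_mk_isRed hWred]
        exact ⟨⟨(u, true), _, rfl, Or.inl rfl⟩, fun h => by simp at h⟩
      · have ihc' : clsHead u v y t'.head? M := ihc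
        unfold clsHead at ihc'
        by_cases hy1 : y = (u, true)
        · -- C2
          subst hy1
          rw [if_pos rfl] at ihc'
          obtain ⟨⟨z0, M₀, hM, hz0⟩, -⟩ := ihc'
          have key : θ (mk ((u, true) :: (u, true) :: t')) =
              mk ((u, true) :: (u, true) :: (v, true) :: M) := by
            rw [hsplit, e_true, hu]
            simp only [mk_cons, e_true]
            group
          have hWred : IsRed ((u, true) :: (u, true) :: (v, true) :: M) := by
            refine IsRed.cons (IsRed.cons (IsRed.cons hMred ?_) ?_) ?_
            · intro z hz
              rw [hM] at hz
              simp at hz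
              subst hz
              rcases hz0 with rfl | rfl | rfl
              · simp [Cancels, huv, huv.symm]
              · simp [Cancels, huv, huv.symm]
              · simp [Cancels, huv, huv.symm]
            · simp [Cancels, huv, huv.symm]
            · simp [Cancels, huv, huv.symm]
          rw [key, toWord_mk_isRed hWred]
          exact ⟨⟨(u, true), _, rfl, Or.inl rfl⟩, fun _ => ⟨(v, true) :: M, rfl⟩⟩
        · by_cases hy2 : y = (v, true)
          · -- C3
            subst hy2
            rw [if_neg (by simp [huv.symm]), if_neg (by simp), if_pos rfl] at ihc'
            rcases ihc' with ⟨M₃, hM⟩ | ⟨M₃, hM, hz⟩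
            · -- C3a
              have key : θ (mk ((u, true) :: (v, true) :: t')) =
                  mk ((u, true) :: (v, true) :: M₃) := by
                rw [hsplit, e_true, hu, hM]
                simp only [mk_cons, e_true, e_false]
                group
              have hj : ∀ z ∈ M₃.head?, ¬ Cancels (v, true) z := by
                rw [hM] at hMred
                exact (hMred.tail'.tail').head_rel
              have hWred : IsRed ((u, true) :: (v, true) :: M₃) := by
                have hM₃ : IsRed M₃ := by
                  rw [hM] at hMred
                  exact hMred.tail'.tail'.tail'
                refine IsRed.cons (IsRed.cons hM₃ hj) ?_
                simp [Cancels, huv, huv.symm]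
              rw [key, toWord_mk_isRed hWred]
              exact ⟨⟨(u, true), _, rfl, Or.inl rfl⟩, fun h => absurd h (by simp [huv.symm])⟩
            · -- C3b
              have key : θ (mk ((u, true) :: (v, true) :: t')) = mk M₃ := by
                rw [hsplit, e_true, hu, hM]
                simp only [mk_cons, e_true, e_false]
                group
              have hM₃red : IsRed M₃ := by
                rw [hM] at hMred
                exact hMred.tail'.tail'.tail'
              have hne : M₃ ≠ [] := by
                intro h0
                rw [h0, mk_nil] at key
                have : mk ((u, true) :: (v, true) :: t') = (1 : FreeGroup α) := by
                  have := congrArg θ.symm key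
                  simpa using this
                exact mk_ne_one hred (by simp) this
              rcases M₃ with _ | ⟨z, M₄⟩
              · exact absurd rfl hne
              rw [key, toWord_mk_isRed hM₃red]
              refine ⟨⟨z, M₄, rfl, ?_⟩, fun h => absurd h (by simp [huv.symm])⟩
              rcases hz z (by simp) with rfl | rfl
              · exact Or.inr (Or.inl rfl)
              · exact Or.inr (Or.inr rfl)
          · by_cases hy3 : y = (v, false)
            · -- C4
              subst hy3
              rw [if_neg (by simp [huv.symm]), if_neg (by simp [huv.symm]),
                if_neg (by simp), if_pos rfl] at ihc'
              obtain ⟨M₁, hM, hcond⟩ := ihc'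
              rcases M₁ with _ | ⟨z, M₂⟩
              · have key : θ (mk ((u, true) :: (v, false) :: t')) =
                    mk [(u, true), (u, true)] := by
                  rw [hsplit, e_true, hu, hM]
                  simp only [mk_cons, mk_nil, e_true, e_false]
                  group
                have hWred : IsRed [(u, true), (u, true)] := by
                  refine IsRed.cons (IsRed.cons isRed_nil (by simp)) ?_
                  simp [Cancels, huv, huv.symm]
                rw [key, toWord_mk_isRed hWred]
                exact ⟨⟨(u, true), _, rfl, Or.inl rfl⟩, fun h => absurd h (by simp [huv.symm])⟩
              · by_cases hz : z = (u, false)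
                · subst hz
                  have hcond2 := hcond M₂ rfl
                  have key : θ (mk ((u, true) :: (v, false) :: t')) =
                      mk ((u, true) :: M₂) := by
                    rw [hsplit, e_true, hu, hM]
                    simp only [mk_cons, e_true, e_false]
                    group
                  have hWred : IsRed ((u, true) :: M₂) := by
                    refine IsRed.cons ?_ ?_
                    · rw [hM] at hMred
                      exact hMred.tail'.tail'
                    · intro w hw
                      rcases hcond2 w hw with rfl | ⟨hw1, _⟩
                      · simp [Cancels, huv, huv.symm]
                      · exact fun hc => hw1 hc.1.symm
                  rw [key, toWord_mk_isRed hWred]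
                  exact ⟨⟨(u, true), _, rfl, Or.inl rfl⟩, fun h => absurd h (by simp [huv.symm])⟩
                · have key : θ (mk ((u, true) :: (v, false) :: t')) =
                      mk ((u, true) :: (u, true) :: z :: M₂) := by
                    rw [hsplit, e_true, hu, hM]
                    simp only [mk_cons, e_true, e_false]
                    group
                  have hWred : IsRed ((u, true) :: (u, true) :: z :: M₂) := by
                    refine IsRed.cons (IsRed.cons ?_ ?_) ?_
                    · rw [hM] at hMred
                      exact hMred.tail'
                    · intro w hw
                      simp at hw
                      subst hw
                      intro hc
                      apply hz
                      rcases hc with ⟨hc1, hc2⟩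
                      rw [Prod.ext_iff]
                      refine ⟨hc1.symm, ?_⟩
                      revert hc2
                      cases z.2 <;> simp
                    · simp [Cancels, huv, huv.symm]
                  rw [key, toWord_mk_isRed hWred]
                  exact ⟨⟨(u, true), _, rfl, Or.inl rfl⟩, fun h => absurd h (by simp [huv.symm])⟩
            · -- C5 : y = γ
              have hy4 : y ≠ (u, false) := fun h => hth (by simp [h])
              have hyu : y.1 ≠ u := by
                intro h
                rcases y with ⟨k, b⟩
                simp at h
                subst h
                cases b
                · exact hy4 rfl
                · exact hy1 rfl
              have hyv : y.1 ≠ v := by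
                intro h
                rcases y with ⟨k, b⟩
                simp at h
                subst h
                cases b
                · exact hy3 rfl
                · exact hy2 rfl
              rw [if_neg hy1, if_neg hy4, if_neg hy2, if_neg hy3] at ihc'
              have key : θ (mk ((u, true) :: y :: t')) =
                  mk ((u, true) :: (u, true) :: (v, true) :: M) := by
                rw [hsplit, e_true, hu]
                simp only [mk_cons, e_true]
                group
              have hWred : IsRed ((u, true) :: (u, true) :: (v, true) :: M) := by
                refine IsRed.cons (IsRed.cons (IsRed.cons hMred ?_) ?_) ?_
                · intro z hz
                  rw [ihc'] at hz
                  simp at hz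
                  subst hz
                  exact fun hc => hyv hc.1.symm
                · simp [Cancels, huv, huv.symm]
                · simp [Cancels, huv, huv.symm]
              rw [key, toWord_mk_isRed hWred]
              refine ⟨⟨(u, true), _, rfl, Or.inl rfl⟩, fun h => ?_⟩
              exact absurd (by simpa using h) hy1
    · by_cases hx2 : x = (u, false)
      · -- case B : x = u⁻
        subst hx2
        have hth : t.head? ≠ some (u, true) := by
          intro hh
          exact hred.head_rel (u, true) hh ⟨rfl, rfl⟩
        have hB := cls_head_B ihc hth
        have key : θ (mk ((u, false) :: t)) = mk ((v, false) :: (u, false) :: (u, false) :: M) := by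
          rw [hsplit, e_false, _root_.map_inv, hu]
          simp only [mk_cons, e_true, e_false]
          group
        have hWred : IsRed ((v, false) :: (u, false) :: (u, false) :: M) := by
          refine IsRed.cons (IsRed.cons (IsRed.cons hMred ?_) ?_) ?_
          · intro z hz
            rcases hB z hz with rfl | ⟨hz1, hz2⟩
            · simp [Cancels, huv, huv.symm]
            · exact nc_fst (Ne.symm hz1)
          · simp [Cancels, huv, huv.symm]
          · simp [Cancels, huv, huv.symm]
        show clsHead u v (u, false) t.head? (θ (mk ((u, false) :: t))).toWord
        rw [key, toWord_mk_isRed hWred]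
        unfold clsHead
        rw [if_neg (by simp), if_pos rfl]
        exact ⟨M, rfl, hB⟩
      · by_cases hx3 : x = (v, true)
        · subst hx3
          have hth : t.head? ≠ some (v, false) :=
            fun hh => hred.head_rel (v, false) hh ⟨rfl, rfl⟩
          show clsHead u v (v, true) t.head? (θ (mk ((v, true) :: t))).toWord
          unfold clsHead
          rw [if_neg (by simp [huv.symm]), if_neg (by simp), if_pos rfl]
          rcases t with _ | ⟨y, t'⟩
          · -- D1
            have hM : M = [] := ihc
            have key : θ (mk [(v, true)]) = mk [(v, false), (u, false), (v, true)] := by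
              rw [hsplit, hM, mk_nil, e_true, hv]
              simp only [mk_cons, mk_nil, e_true, e_false]
              group
            have hWred : IsRed [(v, false), (u, false), (v, true)] := by
              refine IsRed.cons (IsRed.cons (IsRed.cons isRed_nil (by simp)) ?_) ?_
              · simp [Cancels, huv, huv.symm]
              · simp [Cancels, huv, huv.symm]
            rw [key, toWord_mk_isRed hWred]
            exact Or.inl ⟨[], rfl⟩
          · have ihc' : clsHead u v y t'.head? M := ihc
            unfold clsHead at ihc'
            by_cases hy1 : y = (u, true)
            · -- D2
              subst hy1
              rw [if_pos rfl] at ihc'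
              obtain ⟨⟨z0, M₀, hM, hz0⟩, -⟩ := ihc'
              have key : θ (mk ((v, true) :: (u, true) :: t')) =
                  mk ((v, false) :: (u, false) :: (v, true) :: M) := by
                rw [hsplit, e_true, hv]
                simp only [mk_cons, e_true, e_false]
                group
              have hWred : IsRed ((v, false) :: (u, false) :: (v, true) :: M) := by
                refine IsRed.cons (IsRed.cons (IsRed.cons hMred ?_) ?_) ?_
                · intro z hz
                  rw [hM] at hz
                  simp at hz
                  subst hz
                  rcases hz0 with rfl | rfl | rfl
                  · simp [Cancels, huv, huv.symm]
                  · simp [Cancels, huv, huv.symm]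
                  · simp [Cancels, huv, huv.symm]
                · simp [Cancels, huv, huv.symm]
                · simp [Cancels, huv, huv.symm]
              rw [key, toWord_mk_isRed hWred]
              exact Or.inl ⟨M, rfl⟩
            · by_cases hy2 : y = (u, false)
              · -- D3
                subst hy2
                rw [if_neg (by simp), if_pos rfl] at ihc'
                obtain ⟨M₃, hM, hcond⟩ := ihc'
                have key : θ (mk ((v, true) :: (u, false) :: t')) =
                    mk ((v, false) :: (u, false) :: (u, false) :: (u, false) :: M₃) := by
                  rw [hsplit, e_true, hv, hM]
                  simp only [mk_cons, e_true, e_false]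
                  group
                have hWred : IsRed
                    ((v, false) :: (u, false) :: (u, false) :: (u, false) :: M₃) := by
                  have h4 : IsRed ((u, false) :: M₃) := by
                    rw [hM] at hMred
                    exact hMred.tail'.tail'
                  refine IsRed.cons (IsRed.cons (IsRed.cons h4 (by simp [Cancels, huv, huv.symm])) ?_) ?_
                  · simp [Cancels, huv, huv.symm]
                  · simp [Cancels, huv, huv.symm]
                rw [key, toWord_mk_isRed hWred]
                exact Or.inr ⟨(u, false) :: M₃, rfl, fun z hz => by
                  simp at hz
                  subst hz
                  exact Or.inl rfl⟩
              · by_cases hy3 : y = (v, true)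
                · -- D4
                  subst hy3
                  rw [if_neg (by simp [huv.symm]), if_neg (by simp), if_pos rfl] at ihc'
                  rcases ihc' with ⟨M₃, hM⟩ | ⟨M₃, hM, hz⟩
                  · -- D4a
                    have key : θ (mk ((v, true) :: (v, true) :: t')) =
                        mk ((v, false) :: (u, false) :: (u, false) :: (v, true) :: M₃) := by
                      rw [hsplit, e_true, hv, hM]
                      simp only [mk_cons, e_true, e_false]
                      group
                    have hWred : IsRed
                        ((v, false) :: (u, false) :: (u, false) :: (v, true) :: M₃) := by
                      have h4 : IsRed ((v, true) :: M₃) := by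
                        rw [hM] at hMred
                        exact hMred.tail'.tail'
                      refine IsRed.cons (IsRed.cons (IsRed.cons h4 ?_) ?_) ?_
                      · simp [Cancels, huv, huv.symm]
                      · simp [Cancels, huv, huv.symm]
                      · simp [Cancels, huv, huv.symm]
                    rw [key, toWord_mk_isRed hWred]
                    exact Or.inr ⟨(v, true) :: M₃, rfl, fun z hz => by
                      simp at hz
                      subst hz
                      exact Or.inr rfl⟩
                  · -- D4b
                    have key : θ (mk ((v, true) :: (v, true) :: t')) =
                        mk ((v, false) :: (u, false) :: (u, false) :: (u, false) :: M₃) := by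
                      rw [hsplit, e_true, hv, hM]
                      simp only [mk_cons, e_true, e_false]
                      group
                    have hWred : IsRed
                        ((v, false) :: (u, false) :: (u, false) :: (u, false) :: M₃) := by
                      have h4 : IsRed ((u, false) :: M₃) := by
                        have hM₃ : IsRed M₃ := by
                          rw [hM] at hMred
                          exact hMred.tail'.tail'.tail'
                        refine IsRed.cons hM₃ ?_
                        intro z hz'
                        rcases hz z hz' with rfl | rfl
                        · simp [Cancels, huv, huv.symm]
                        · simp [Cancels, huv, huv.symm]
                      refine IsRed.cons (IsRed.cons (IsRed.cons h4 (by simp [Cancels, huv, huv.symm])) ?_) ?_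
                      · simp [Cancels, huv, huv.symm]
                      · simp [Cancels, huv, huv.symm]
                    rw [key, toWord_mk_isRed hWred]
                    exact Or.inr ⟨(u, false) :: M₃, rfl, fun z hz' => by
                      simp at hz'
                      subst hz'
                      exact Or.inl rfl⟩
                · -- D6 : y = γ  (y = (v,false) excluded by hth)
                  have hy4 : y ≠ (v, false) := fun h => hth (by simp [h])
                  have hyu : y.1 ≠ u := by
                    intro h
                    rcases y with ⟨k, b⟩
                    simp at h
                    subst h
                    cases b
                    · exact hy2 rfl
                    · exact hy1 rfl
                  have hyv : y.1 ≠ v := by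
                    intro h
                    rcases y with ⟨k, b⟩
                    simp at h
                    subst h
                    cases b
                    · exact hy4 rfl
                    · exact hy3 rfl
                  rw [if_neg hy1, if_neg hy2, if_neg hy3, if_neg hy4] at ihc'
                  have key : θ (mk ((v, true) :: y :: t')) =
                      mk ((v, false) :: (u, false) :: (v, true) :: M) := by
                    rw [hsplit, e_true, hv]
                    simp only [mk_cons, e_true, e_false]
                    group
                  have hWred : IsRed ((v, false) :: (u, false) :: (v, true) :: M) := by
                    refine IsRed.cons (IsRed.cons (IsRed.cons hMred ?_) ?_) ?_
                    · intro z hz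
                      rw [ihc'] at hz
                      simp at hz
                      subst hz
                      exact fun hc => hyv hc.1.symm
                    · simp [Cancels, huv, huv.symm]
                    · simp [Cancels, huv, huv.symm]
                  rw [key, toWord_mk_isRed hWred]
                  exact Or.inl ⟨M, rfl⟩
        · by_cases hx4 : x = (v, false)
          · subst hx4
            have hth : t.head? ≠ some (v, true) :=
              fun hh => hred.head_rel (v, true) hh ⟨rfl, rfl⟩
            have hθx : θ (e (v, false)) = (of v)⁻¹ * of u * of v := by
              rw [e_false, _root_.map_inv, hv]
              group
            show clsHead u v (v, false) t.head? (θ (mk ((v, false) :: t))).toWord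
            unfold clsHead
            rw [if_neg (by simp [huv.symm]), if_neg (by simp [huv.symm]),
              if_neg (by simp), if_pos rfl]
            rcases t with _ | ⟨y, t'⟩
            · -- E1
              have hM : M = [] := ihc
              have key : θ (mk [(v, false)]) = mk [(v, false), (u, true), (v, true)] := by
                rw [hsplit, hM, mk_nil, hθx]
                simp only [mk_cons, mk_nil, e_true, e_false]
                group
              have hWred : IsRed [(v, false), (u, true), (v, true)] := by
                refine IsRed.cons (IsRed.cons (IsRed.cons isRed_nil (by simp)) ?_) ?_
                · simp [Cancels, huv, huv.symm]
                · simp [Cancels, huv, huv.symm]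
              rw [key, toWord_mk_isRed hWred]
              exact ⟨[(u, true), (v, true)], rfl, fun M'' h => by simp at h⟩
            · have ihc' : clsHead u v y t'.head? M := ihc
              unfold clsHead at ihc'
              by_cases hy1 : y = (u, true)
              · -- E2
                subst hy1
                rw [if_pos rfl] at ihc'
                obtain ⟨⟨z0, M₀, hM, hz0⟩, -⟩ := ihc'
                have key : θ (mk ((v, false) :: (u, true) :: t')) =
                    mk ((v, false) :: (u, true) :: (v, true) :: M) := by
                  rw [hsplit, hθx]
                  simp only [mk_cons, e_true, e_false]
                  group
                have hWred : IsRed ((v, false) :: (u, true) :: (v, true) :: M) := by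
                  refine IsRed.cons (IsRed.cons (IsRed.cons hMred ?_) ?_) ?_
                  · intro z hz
                    rw [hM] at hz
                    simp at hz
                    subst hz
                    rcases hz0 with rfl | rfl | rfl
                    · simp [Cancels, huv, huv.symm]
                    · simp [Cancels, huv, huv.symm]
                    · simp [Cancels, huv, huv.symm]
                  · simp [Cancels, huv, huv.symm]
                  · simp [Cancels, huv, huv.symm]
                rw [key, toWord_mk_isRed hWred]
                exact ⟨(u, true) :: (v, true) :: M, rfl, fun M'' h => by simp at h⟩
              · by_cases hy2 : y = (u, false)
                · -- E3
                  subst hy2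
                  rw [if_neg (by simp), if_pos rfl] at ihc'
                  obtain ⟨M₃, hM, hcond⟩ := ihc'
                  have key : θ (mk ((v, false) :: (u, false) :: t')) =
                      mk ((v, false) :: (u, false) :: M₃) := by
                    rw [hsplit, hθx, hM]
                    simp only [mk_cons, e_true, e_false]
                    group
                  have hWred : IsRed ((v, false) :: (u, false) :: M₃) := by
                    have hM₃ : IsRed M₃ := by
                      rw [hM] at hMred
                      exact hMred.tail'.tail'.tail'
                    refine IsRed.cons (IsRed.cons hM₃ ?_) ?_
                    · intro z hz
                      rcases hcond z hz with rfl | ⟨hz1, _⟩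
                      · simp [Cancels, huv, huv.symm]
                      · exact fun hc => hz1 hc.1.symm
                    · simp [Cancels, huv, huv.symm]
                  rw [key, toWord_mk_isRed hWred]
                  refine ⟨(u, false) :: M₃, rfl, fun M'' h => ?_⟩
                  have : M₃ = M'' := by injection h
                  subst this
                  exact hcond
                · by_cases hy3 : y = (v, false)
                  · -- E4
                    subst hy3
                    rw [if_neg (by simp [huv.symm]), if_neg (by simp [huv.symm]),
                      if_neg (by simp), if_pos rfl] at ihc'
                    obtain ⟨M₁, hM, hcond⟩ := ihc'
                    rcases M₁ with _ | ⟨z, M₂⟩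
                    · have key : θ (mk ((v, false) :: (v, false) :: t')) =
                          mk [(v, false), (u, true)] := by
                        rw [hsplit, hθx, hM]
                        simp only [mk_cons, mk_nil, e_true, e_false]
                        group
                      have hWred : IsRed [(v, false), (u, true)] := by
                        refine IsRed.cons (IsRed.cons isRed_nil (by simp)) ?_
                        simp [Cancels, huv, huv.symm]
                      rw [key, toWord_mk_isRed hWred]
                      exact ⟨[(u, true)], rfl, fun M'' h => by simp at h⟩
                    · by_cases hz : z = (u, false)
                      · subst hz
                        have hcond2 := hcond M₂ rfl
                        have key : θ (mk ((v, false) :: (v, false) :: t')) =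
                            mk ((v, false) :: M₂) := by
                          rw [hsplit, hθx, hM]
                          simp only [mk_cons, e_true, e_false]
                          group
                        have hWred : IsRed ((v, false) :: M₂) := by
                          have hM₂ : IsRed M₂ := by
                            rw [hM] at hMred
                            exact hMred.tail'.tail'
                          refine IsRed.cons hM₂ ?_
                          intro w hw
                          rcases hcond2 w hw with rfl | ⟨_, hw2⟩
                          · simp [Cancels, huv, huv.symm]
                          · exact fun hc => hw2 hc.1.symm
                        rw [key, toWord_mk_isRed hWred]
                        refine ⟨M₂, rfl, fun M'' h => ?_⟩
                        subst h
                        rcases hcond2 (u, false) (by simp) with h1 | h1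
                        · exact absurd h1 (by simp [huv])
                        · exact absurd rfl h1.1
                      · have key : θ (mk ((v, false) :: (v, false) :: t')) =
                            mk ((v, false) :: (u, true) :: z :: M₂) := by
                          rw [hsplit, hθx, hM]
                          simp only [mk_cons, e_true, e_false]
                          group
                        have hWred : IsRed ((v, false) :: (u, true) :: z :: M₂) := by
                          have hzM : IsRed (z :: M₂) := by
                            rw [hM] at hMred
                            exact hMred.tail'
                          refine IsRed.cons (IsRed.cons hzM ?_) ?_
                          · intro w hw
                            simp at hw
                            subst hw
                            intro hc
                            apply hz
                            rcases hc with ⟨hc1, hc2⟩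
                            rw [Prod.ext_iff]
                            refine ⟨hc1.symm, ?_⟩
                            revert hc2
                            cases z.2 <;> simp
                          · simp [Cancels, huv, huv.symm]
                        rw [key, toWord_mk_isRed hWred]
                        exact ⟨(u, true) :: z :: M₂, rfl, fun M'' h => by simp at h⟩
                  · -- E5 : y = γ  (y = (v,true) excluded by hth)
                    have hy4 : y ≠ (v, true) := fun h => hth (by simp [h])
                    have hyu : y.1 ≠ u := by
                      intro h
                      rcases y with ⟨k, b⟩
                      simp at h
                      subst h
                      cases b
                      · exact hy2 rfl
                      · exact hy1 rfl
                    have hyv : y.1 ≠ v := by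
                      intro h
                      rcases y with ⟨k, b⟩
                      simp at h
                      subst h
                      cases b
                      · exact hy3 rfl
                      · exact hy4 rfl
                    rw [if_neg hy1, if_neg hy2, if_neg hy4, if_neg hy3] at ihc'
                    have key : θ (mk ((v, false) :: y :: t')) =
                        mk ((v, false) :: (u, true) :: (v, true) :: M) := by
                      rw [hsplit, hθx]
                      simp only [mk_cons, e_true, e_false]
                      group
                    have hWred : IsRed ((v, false) :: (u, true) :: (v, true) :: M) := by
                      refine IsRed.cons (IsRed.cons (IsRed.cons hMred ?_) ?_) ?_
                      · intro z hz
                        rw [ihc'] at hz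
                        simp at hz
                        subst hz
                        exact fun hc => hyv hc.1.symm
                      · simp [Cancels, huv, huv.symm]
                      · simp [Cancels, huv, huv.symm]
                    rw [key, toWord_mk_isRed hWred]
                    exact ⟨(u, true) :: (v, true) :: M, rfl, fun M'' h => by simp at h⟩
          · -- case A : x = γ
            have hju : x.1 ≠ u := by
              intro h
              rcases x with ⟨j, b⟩
              simp at h
              subst h
              cases b
              · exact hx2 rfl
              · exact hx1 rfl
            have hjv : x.1 ≠ v := by
              intro h
              rcases x with ⟨j, b⟩
              simp at h
              subst h
              cases b
              · exact hx4 rfl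
              · exact hx3 rfl
            have hjn := head_ne_of_cls ihc x hju hjv (hred.head_rel)
            have hθe : θ (e x) = e x := by
              rcases x with ⟨j, b⟩
              cases b
              · rw [e_false, _root_.map_inv, ho j hju hjv]
              · rw [e_true, ho j hju hjv]
            have key : θ (mk (x :: t)) = mk (x :: M) := by
              rw [hsplit, hθe, mk_cons]
            have hWred : IsRed (x :: M) := IsRed.cons hMred hjn
            show clsHead u v x t.head? (θ (mk (x :: t))).toWord
            rw [key, toWord_mk_isRed hWred]
            unfold clsHead
            rw [if_neg hx1, if_neg hx2, if_neg hx3, if_neg hx4]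
            rfl

section Assemble

variable {u v : α} {θ : FreeGroup α ≃* FreeGroup α}

/-- Applying the Wada generator to an element of the invariant class gives a reduced word
beginning with two positive `u`s. -/
lemma sigma_apply_startsAA (huv : u ≠ v)
    (hu : θ (of u) = of u * of u * of v)
    (hv : θ (of v) = (of v)⁻¹ * (of u)⁻¹ * of v)
    (ho : ∀ j, j ≠ u → j ≠ v → θ (of j) = of j) {g : FreeGroup α}
    (h : g = of u ∨ ∃ K, g.toWord = (u, true) :: (u, true) :: K) :
    ∃ K', (θ g).toWord = (u, true) :: (u, true) :: K' := by
  rcases h with rfl | ⟨K, hK⟩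
  · refine ⟨[(v, true)], ?_⟩
    have key : θ (of u) = mk [(u, true), (u, true), (v, true)] := by
      rw [hu]
      simp only [mk_cons, mk_nil, e_true]
      group
    have hWred : IsRed [(u, true), (u, true), (v, true)] := by
      refine IsRed.cons (IsRed.cons (IsRed.cons isRed_nil (by simp)) ?_) ?_ <;>
        simp [Cancels, huv, huv.symm]
    rw [key, toWord_mk_isRed hWred]
  · have hred : IsRed ((u, true) :: (u, true) :: K) := hK ▸ isRed_toWord g
    have hcls := master u v huv θ hu hv ho _ hred
    have hgmk : mk ((u, true) :: (u, true) :: K) = g := by rw [← hK, mk_toWord]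
    rw [hgmk] at hcls
    have hcls' : clsHead u v (u, true) ((u, true) :: K).head? (θ g).toWord := hcls
    unfold clsHead at hcls'
    rw [if_pos rfl] at hcls'
    exact hcls'.2 (by simp)

/-- Generators not touching the letter `a` preserve the "starts with `a a`" property. -/
lemma sigma_fix_startsAA (huv : u ≠ v)
    (hu : θ (of u) = of u * of u * of v)
    (hv : θ (of v) = (of v)⁻¹ * (of u)⁻¹ * of v)
    (ho : ∀ j, j ≠ u → j ≠ v → θ (of j) = of j) (a : α) (hau : a ≠ u) (hav : a ≠ v) {g : FreeGroup α}
    (h : ∃ K, g.toWord = (a, true) :: (a, true) :: K) :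
    ∃ K', (θ g).toWord = (a, true) :: (a, true) :: K' := by
  obtain ⟨K, hK⟩ := h
  have hred : IsRed ((a, true) :: (a, true) :: K) := hK ▸ isRed_toWord g
  have hKred : IsRed K := hred.tail'.tail'
  have hg : g = of a * (of a * mk K) := by
    rw [← mk_toWord (x := g), hK, mk_cons, mk_cons, e_true]
  have hclsK := master u v huv θ hu hv ho K hKred
  have hhead := head_ne_of_cls hclsK (a, true) hau hav (hred.tail'.head_rel)
  have hKmk : θ (mk K) = mk ((θ (mk K)).toWord) := mk_toWord.symm
  have key : θ g = mk ((a, true) :: (a, true) :: (θ (mk K)).toWord) := by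
    conv_lhs => rw [hg, _root_.map_mul, _root_.map_mul, ho a hau hav, hKmk]
    simp only [mk_cons, e_true]
  have hWred : IsRed ((a, true) :: (a, true) :: (θ (mk K)).toWord) := by
    refine IsRed.cons (IsRed.cons (isRed_toWord _) hhead) ?_
    simp [Cancels]
  rw [key, toWord_mk_isRed hWred]
  exact ⟨_, rfl⟩

/-- Inverses of generators not touching the letter `a` also preserve the property. -/
lemma sigma_inv_fix_startsAA (huv : u ≠ v)
    (hu : θ (of u) = of u * of u * of v)
    (hv : θ (of v) = (of v)⁻¹ * (of u)⁻¹ * of v)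
    (ho : ∀ j, j ≠ u → j ≠ v → θ (of j) = of j) (a : α) (hau : a ≠ u) (hav : a ≠ v) {g : FreeGroup α}
    (h : ∃ K, g.toWord = (a, true) :: (a, true) :: K) :
    ∃ K', (θ.symm g).toWord = (a, true) :: (a, true) :: K' := by
  obtain ⟨K, hK⟩ := h
  have hred : IsRed ((a, true) :: (a, true) :: K) := hK ▸ isRed_toWord g
  have hKred : IsRed K := hred.tail'.tail'
  have hg : g = of a * (of a * mk K) := by
    rw [← mk_toWord (x := g), hK, mk_cons, mk_cons, e_true]
  have hsymm_a : θ.symm (of a) = of a := by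
    have := congrArg θ.symm (ho a hau hav)
    rw [MulEquiv.symm_apply_apply] at this
    exact this.symm
  have hKmk : θ.symm (mk K) = mk ((θ.symm (mk K)).toWord) := mk_toWord.symm
  have key : θ.symm g = mk ((a, true) :: (a, true) :: (θ.symm (mk K)).toWord) := by
    conv_lhs => rw [hg, _root_.map_mul, _root_.map_mul, hsymm_a, hKmk]
    simp only [mk_cons, e_true]
  have hhead : ∀ z ∈ (θ.symm (mk K)).toWord.head?, ¬ Cancels (a, true) z := by
    intro z hz hc
    have hz2 : z.2 = false := by
      rcases hc with ⟨-, hc2⟩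
      revert hc2
      cases z.2 <;> simp
    have hz1 : z = (a, false) := by
      rw [Prod.ext_iff]
      exact ⟨hc.1.symm, hz2⟩
    subst hz1
    rcases hM' : (θ.symm (mk K)).toWord with _ | ⟨z0, rest⟩
    · rw [hM'] at hz
      simp at hz
    · rw [hM'] at hz
      simp at hz
      have hmkeq : mk (z0 :: rest) = θ.symm (mk K) := by rw [← hM', mk_toWord]
      have hcls := master u v huv θ hu hv ho (z0 :: rest)
        (hM' ▸ isRed_toWord (θ.symm (mk K)))
      rw [hmkeq, MulEquiv.apply_symm_apply] at hcls
      rw [hz] at hcls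
      have hcls' : clsHead u v (a, false) rest.head? (mk K).toWord := hcls
      unfold clsHead at hcls'
      rw [if_neg (by simp [hau]), if_neg (by simp [hau]), if_neg (by simp [hav]),
        if_neg (by simp [hav])] at hcls'
      rw [toWord_mk_isRed hKred] at hcls'
      exact hred.tail'.head_rel (a, false) (Option.mem_def.mpr hcls') ⟨rfl, rfl⟩
  have hWred : IsRed ((a, true) :: (a, true) :: (θ.symm (mk K)).toWord) := by
    refine IsRed.cons (IsRed.cons (isRed_toWord _) hhead) ?_
    simp [Cancels]
  rw [key, toWord_mk_isRed hWred]
  exact ⟨_, rfl⟩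

end Assemble

end WadaAux
end

set_option maxHeartbeats 1000000 in

/-- If `w` is a braid word beginning with `σ_1` and containing no occurrence of
`σ_1⁻¹`, and `σ̂` is the image of the braid represented by `w` under Wada's
representation of type (3)
(`σ_i ↦ (x_i ↦ x_i^2 x_{i+1}, x_{i+1} ↦ x_{i+1}⁻¹ x_i⁻¹ x_{i+1})`), then the reduced
word of `σ̂(x_1)` contains at least 2 occurrences of letters `x_1^{±1}`. -/
theorem wada_type3_sigma1_positive_two_occurrences (n : ℕ) (hn : 2 ≤ n)
    (ψ : PresentedGroup (braidRels (n - 1)) →* MulAut (FreeGroup (Fin n)))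
    (hψ : ∀ i : Fin (n - 1),
      (ψ (PresentedGroup.of i)) (FreeGroup.of (xL n i)) =
          FreeGroup.of (xL n i) ^ 2 * FreeGroup.of (xR n i) ∧
      (ψ (PresentedGroup.of i)) (FreeGroup.of (xR n i)) =
          (FreeGroup.of (xR n i))⁻¹ * (FreeGroup.of (xL n i))⁻¹ * FreeGroup.of (xR n i) ∧
      ∀ j : Fin n, j ≠ xL n i → j ≠ xR n i →
        (ψ (PresentedGroup.of i)) (FreeGroup.of j) = FreeGroup.of j)
    (w : List (Fin (n - 1) × Bool))
    (hhead : w.head? = some ((⟨0, by omega⟩ : Fin (n - 1)), true))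
    (hnonneg : ∀ p ∈ w, p ≠ ((⟨0, by omega⟩ : Fin (n - 1)), false)) :
    2 ≤ ((ψ (PresentedGroup.mk (braidRels (n - 1)) (FreeGroup.mk w)))
          (FreeGroup.of (⟨0, by omega⟩ : Fin n))).toWord.countP
            (fun p => decide (p.1 = (⟨0, by omega⟩ : Fin n))) := by
  classical
  have hn1 : 0 < n - 1 := by omega
  set i0 : Fin (n - 1) := ⟨0, hn1⟩ with hi0def
  set a0 : Fin n := ⟨0, by omega⟩ with ha0def
  -- basic facts about the generator data
  have hxL0 : xL n i0 = a0 := rfl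
  have hxuv : ∀ i : Fin (n - 1), xL n i ≠ xR n i := by
    intro i h
    have := congrArg Fin.val h
    simp [xL, xR] at this
  have hu' : ∀ i : Fin (n - 1), (ψ (PresentedGroup.of i)) (FreeGroup.of (xL n i)) =
      FreeGroup.of (xL n i) * FreeGroup.of (xL n i) * FreeGroup.of (xR n i) := by
    intro i
    rw [(hψ i).1, pow_two]
  have hv' := fun i => (hψ i).2.1
  have ho' := fun i => (hψ i).2.2
  have hxLne : ∀ i : Fin (n - 1), i ≠ i0 → a0 ≠ xL n i := by
    intro i hi h
    apply hi
    have := congrArg Fin.val h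
    simp [xL, a0] at this
    exact Fin.ext this.symm
  have hxRne : ∀ i : Fin (n - 1), a0 ≠ xR n i := by
    intro i h
    have := congrArg Fin.val h
    simp [xR, a0] at this
  -- decomposition of the action of a single letter
  have hsplit : ∀ (p : Fin (n - 1) × Bool) (l : List (Fin (n - 1) × Bool)),
      (ψ (PresentedGroup.mk (braidRels (n - 1)) (FreeGroup.mk (p :: l))))
        = (ψ (PresentedGroup.mk (braidRels (n - 1)) (WadaAux.e p)))
          * (ψ (PresentedGroup.mk (braidRels (n - 1)) (FreeGroup.mk l))) := by
    intro p l
    rw [WadaAux.mk_cons, map_mul, map_mul]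
  have hgen_t : ∀ i : Fin (n - 1),
      ψ (PresentedGroup.mk (braidRels (n - 1)) (WadaAux.e (i, true)))
        = ψ (PresentedGroup.of i) := fun i => rfl
  have hgen_f : ∀ i : Fin (n - 1),
      ψ (PresentedGroup.mk (braidRels (n - 1)) (WadaAux.e (i, false)))
        = (ψ (PresentedGroup.of i))⁻¹ := by
    intro i
    show ψ (PresentedGroup.mk (braidRels (n - 1)) (FreeGroup.of i)⁻¹) = _
    rw [map_inv, map_inv]
    rfl
  -- the invariant
  have main : ∀ l : List (Fin (n - 1) × Bool), (∀ p ∈ l, p ≠ (i0, false)) →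
      ((ψ (PresentedGroup.mk (braidRels (n - 1)) (FreeGroup.mk l))) (FreeGroup.of a0)
          = FreeGroup.of a0 ∨
        ∃ K, ((ψ (PresentedGroup.mk (braidRels (n - 1)) (FreeGroup.mk l)))
          (FreeGroup.of a0)).toWord = (a0, true) :: (a0, true) :: K) := by
    intro l
    induction l with
    | nil =>
      intro _
      left
      rw [show FreeGroup.mk ([] : List (Fin (n - 1) × Bool)) = 1 from WadaAux.mk_nil,
        map_one, map_one]
      rfl
    | cons p l ih =>
      intro hp
      have hg := ih (fun q hq => hp q (List.mem_cons_of_mem _ hq))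
      set g := (ψ (PresentedGroup.mk (braidRels (n - 1)) (FreeGroup.mk l)))
        (FreeGroup.of a0) with hgdef
      rw [hsplit p l, MulAut.mul_apply]
      rcases p with ⟨i, s⟩
      by_cases hii : i = i0
      · subst hii
        cases s with
        | false => exact absurd rfl (hp (i0, false) (List.mem_cons_self))
        | true =>
          rw [hgen_t, ← hgdef]
          right
          refine WadaAux.sigma_apply_startsAA (hxuv i0) (hu' i0) (hv' i0) (ho' i0) ?_
          rw [hxL0]
          exact hg
      · have hau := hxLne i hii
        have hav := hxRne i
        cases s with
        | true =>
          rw [hgen_t, ← hgdef]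
          rcases hg with hg | hg
          · left
            rw [hg, ho' i a0 hau hav]
          · right
            exact WadaAux.sigma_fix_startsAA (hxuv i) (hu' i) (hv' i) (ho' i) a0 hau hav hg
        | false =>
          rw [hgen_f, ← hgdef]
          have hinv : ((ψ (PresentedGroup.of i))⁻¹ : MulAut (FreeGroup (Fin n))) g
              = (ψ (PresentedGroup.of i)).symm g := rfl
          rw [hinv]
          rcases hg with hg | hg
          · left
            rw [hg]
            have := congrArg (ψ (PresentedGroup.of i)).symm (ho' i a0 hau hav)
            rw [MulEquiv.symm_apply_apply] at this
            exact this.symm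
          · right
            exact WadaAux.sigma_inv_fix_startsAA (hxuv i) (hu' i) (hv' i) (ho' i) a0 hau hav hg
  -- conclude
  rcases w with _ | ⟨p, l⟩
  · simp at hhead
  · have hp : p = (i0, true) := by simpa using hhead
    subst hp
    have hg := main l (fun q hq => hnonneg q (List.mem_cons_of_mem _ hq))
    rw [hsplit (i0, true) l, MulAut.mul_apply, hgen_t]
    obtain ⟨K', hK'⟩ := WadaAux.sigma_apply_startsAA (hxuv i0) (hu' i0) (hv' i0) (ho' i0)
      (by rw [hxL0]; exact hg)
    rw [hxL0] at hK'
    rw [hK']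
    simp [List.countP_cons]
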